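/- The adjoint quotient map evaluated at Δ_ε gives exactly ε: the coefficients of the minimal (equal to characteristic) p-polynomial of Δ_ε satisfy φ'_i(Δ_ε) = ε_{i+1} for i = 0,...,n−2, i.e. Δ_ε^{p^{n-1}} = Σ_{i=0}^{n-2} ε_{i+1}Δ_ε^{p^i}. -/

import Mathlib

open Finset
namespace AQD
def dig (p N i : ℕ) : ℕ := N / p ^ i % p

lemma dig_lt {p : ℕ} (hp : 1 < p) (N i : ℕ) : dig p N i < p :=
  Nat.mod_lt _ (by omega)

lemma dig_succ {p N i : ℕ} : dig p N (i + 1) = dig p (N / p) i := by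
  simp [dig, Nat.div_div_eq_div_mul, pow_succ, mul_comm]

lemma digit_sum {p : ℕ} (hp : 1 < p) :
    ∀ m N, N < p ^ m → ∑ i ∈ range m, dig p N i * p ^ i = N := by
  intro m
  induction m with
  | zero => intro N hN; simp at hN ⊢; omega
  | succ m ih =>
    intro N hN
    rw [Finset.sum_range_succ']
    have h1 : ∀ i, dig p N (i + 1) * p ^ (i + 1) = p * (dig p (N / p) i * p ^ i) := by
      intro i; rw [dig_succ]; ring
    simp only [h1, ← Finset.mul_sum]
    have hdiv : N / p < p ^ m := by
      rw [Nat.div_lt_iff_lt_mul (by omega)]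
      calc N < p ^ (m + 1) := hN
        _ = p ^ m * p := by ring
    rw [ih (N / p) hdiv]
    simp only [dig, pow_zero, Nat.div_one]
    have := Nat.mod_add_div N p
    omega

lemma sum_digits_lt {p : ℕ} (hp : 1 < p) (m : ℕ) (b : ℕ → ℕ) (hb : ∀ j, j < m → b j < p) :
    ∑ j ∈ range m, b j * p ^ j < p ^ m := by
  induction m with
  | zero => simp
  | succ m ih =>
    rw [Finset.sum_range_succ]
    have h1 := ih (fun j hj => hb j (by omega))
    have h2 : b m ≤ p - 1 := by have := hb m (by omega); omega
    have h3 : b m * p ^ m ≤ (p - 1) * p ^ m := Nat.mul_le_mul_right _ h2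
    have h4 : (p - 1) * p ^ m + p ^ m = p ^ (m + 1) := by
      obtain ⟨q, rfl⟩ : ∃ q, p = q + 1 := ⟨p - 1, by omega⟩
      simp only [Nat.add_sub_cancel, pow_succ]
      ring
    omega

lemma dig_sum_digits {p : ℕ} (hp : 1 < p) :
    ∀ m (b : ℕ → ℕ), (∀ j, j < m → b j < p) → ∀ i, i < m →
      dig p (∑ j ∈ range m, b j * p ^ j) i = b i := by
  intro m
  induction m with
  | zero => omega
  | succ m ih =>
    intro b hb i hi
    set N := ∑ j ∈ range (m+1), b j * p ^ j with hNdef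
    have hsplit : N = b 0 + p * (∑ j ∈ range m, b (j+1) * p ^ j) := by
      rw [hNdef, Finset.sum_range_succ', pow_zero, mul_one, add_comm, Finset.mul_sum]
      congr 1
      apply Finset.sum_congr rfl; intro j _; ring
    have hb0 : b 0 < p := hb 0 (by omega)
    cases i with
    | zero =>
      simp only [dig, pow_zero, Nat.div_one]
      rw [hsplit, Nat.add_mul_mod_self_left, Nat.mod_eq_of_lt hb0]
    | succ i =>
      rw [dig_succ]
      have hNdiv : N / p = ∑ j ∈ range m, b (j+1) * p ^ j := by
        rw [hsplit]; rw [Nat.add_mul_div_left _ _ (by omega : 0 < p)]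
        rw [Nat.div_eq_of_lt hb0]; omega
      rw [hNdiv, ih (fun j => b (j+1)) (fun j hj => hb (j+1) (by omega)) i (by omega)]

lemma dig_pow {p : ℕ} (hp : 1 < p) (i j : ℕ) :
    dig p (p ^ i) j = if j = i then 1 else 0 := by
  unfold dig
  rcases lt_trichotomy j i with h | h | h
  · rw [if_neg (by omega)]
    rw [show i = j + (i - j) by omega, pow_add, Nat.mul_div_cancel_left _ (pow_pos (by omega : 0 < p) j)]
    obtain ⟨t, ht⟩ : p ∣ p ^ (i - j) := dvd_pow_self p (by omega)
    rw [ht, Nat.mul_mod_right]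
  · subst h; rw [if_pos rfl, Nat.div_self (pow_pos (by omega : 0 < p) j),
      Nat.mod_eq_of_lt (by omega)]
  · rw [if_neg (by omega)]
    have : p ^ i < p ^ j := Nat.pow_lt_pow_right hp h
    rw [Nat.div_eq_of_lt this]; simp

lemma dig_top {p m j : ℕ} (hp : 1 < p) (hj : j < m) : dig p (p ^ m - 1) j = p - 1 := by
  unfold dig
  have hj1 : 1 ≤ p ^ j := Nat.one_le_pow _ _ (by omega)
  have h1 : p ^ m - 1 = p ^ j * (p ^ (m - j) - 1) + (p ^ j - 1) := by
    have key : p ^ j * p ^ (m - j) = p ^ m := by rw [← pow_add]; congr 1; omega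
    obtain ⟨c, hc⟩ : ∃ c, p ^ (m - j) = c + 1 :=
      ⟨p ^ (m - j) - 1, by have := Nat.one_le_pow (m - j) p (by omega); omega⟩
    rw [hc] at key ⊢
    have h5 : p ^ j * (c + 1) = p ^ j * c + p ^ j := by ring
    simp only [Nat.add_sub_cancel]
    omega
  rw [h1, Nat.mul_add_div (pow_pos (by omega : 0 < p) j),
      Nat.div_eq_of_lt (by omega), Nat.add_zero]
  have h2 : p ^ (m - j) - 1 = p * (p ^ (m - j - 1) - 1) + (p - 1) := by
    have key2 : p * p ^ (m - j - 1) = p ^ (m - j) := by rw [← pow_succ']; congr 1; omega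
    obtain ⟨d, hd⟩ : ∃ d, p ^ (m - j - 1) = d + 1 :=
      ⟨p ^ (m - j - 1) - 1, by have := Nat.one_le_pow (m - j - 1) p (by omega); omega⟩
    rw [hd] at key2 ⊢
    have h6 : p * (d + 1) = p * d + p := by ring
    simp only [Nat.add_sub_cancel]
    omega
  rw [h2, Nat.mul_add_mod, Nat.mod_eq_of_lt (by omega)]

def lowc (p N : ℕ) : ℕ := dig p N (padicValNat p N)

lemma dig_val_eq_lowc {p N : ℕ} : dig p N (padicValNat p N) = lowc p N := rfl

lemma val_spec {p N : ℕ} [hpp : Fact p.Prime] (h1 : 1 ≤ N) :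
    p ^ padicValNat p N ∣ N ∧ ¬ p ∣ N / p ^ padicValNat p N := by
  constructor
  · exact pow_padicValNat_dvd
  · have := Nat.not_dvd_ordCompl hpp.out (by omega : N ≠ 0)
    rwa [Nat.factorization_def _ hpp.out] at this

lemma val_lt {p m N : ℕ} [hpp : Fact p.Prime] (h1 : 1 ≤ N) (h2 : N < p ^ m) :
    padicValNat p N < m := by
  by_contra h
  have hd : p ^ m ∣ N := dvd_trans (pow_dvd_pow p (by omega)) pow_padicValNat_dvd
  have := Nat.le_of_dvd (by omega) hd
  omega

lemma lowc_pos {p N : ℕ} [hpp : Fact p.Prime] (h1 : 1 ≤ N) : 0 < lowc p N ∧ lowc p N < p := by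
  have hp := hpp.out.two_le
  obtain ⟨hdvd, hnd⟩ := val_spec (p := p) h1
  unfold lowc dig
  constructor
  · rcases Nat.eq_zero_or_pos (N / p ^ padicValNat p N % p) with h | h
    · exfalso; exact hnd (Nat.dvd_of_mod_eq_zero h)
    · exact h
  · exact Nat.mod_lt _ (by omega)

lemma dig_of_lt_val {p N j : ℕ} [hpp : Fact p.Prime] (h1 : 1 ≤ N) (hj : j < padicValNat p N) :
    dig p N j = 0 := by
  have hp := hpp.out.two_le
  obtain ⟨hdvd, -⟩ := val_spec (p := p) h1
  obtain ⟨M, hM⟩ := hdvd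
  unfold dig
  rw [hM, show padicValNat p N = j + (padicValNat p N - j) by omega, pow_add, mul_assoc,
    Nat.mul_div_cancel_left _ (pow_pos (by omega : 0 < p) j)]
  have : p ∣ p ^ (padicValNat p N - j) * M := Dvd.dvd.mul_right (dvd_pow_self p (by omega)) M
  omega

-- writing N = p^vv * M
lemma pred_decomp {p N : ℕ} [hpp : Fact p.Prime] (h1 : 1 ≤ N) :
    ∃ M, N = p ^ padicValNat p N * M ∧ ¬ p ∣ M ∧ 1 ≤ M := by
  obtain ⟨hdvd, hnd⟩ := val_spec (p := p) h1
  obtain ⟨M, hM⟩ := hdvd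
  refine ⟨M, hM, ?_, ?_⟩
  · have hppos : 0 < p ^ padicValNat p N := pow_pos (by have := hpp.out.two_le; omega : 0 < p) _
    have hM' : N / p ^ padicValNat p N = M :=
      Nat.div_eq_of_eq_mul_left hppos (by rw [mul_comm]; exact hM)
    rw [hM'] at hnd
    exact hnd
  · rcases Nat.eq_zero_or_pos M with h | h
    · exfalso; rw [h, mul_zero] at hM; omega
    · exact h

lemma aux_pred_div {N A : ℕ} (hA : 0 < A) (h : N % A ≠ 0) : (N - 1) / A = N / A := by
  have h1 := Nat.mod_add_div N A
  have h2 : N % A < A := Nat.mod_lt _ hA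
  rw [show N - 1 = A * (N / A) + (N % A - 1) by omega,
    Nat.mul_add_div hA, Nat.div_eq_of_lt (show N % A - 1 < A by omega), add_zero]

lemma aux_mul_pred_div {A Q : ℕ} (hA : 0 < A) (hQ : 1 ≤ Q) : (A * Q - 1) / A = Q - 1 := by
  obtain ⟨q, rfl⟩ : ∃ q, Q = q + 1 := ⟨Q - 1, by omega⟩
  have h5 : A * (q + 1) = A * q + A := by ring
  rw [show A * (q + 1) - 1 = A * q + (A - 1) by omega,
    Nat.mul_add_div hA, Nat.div_eq_of_lt (by omega)]
  omega

lemma aux_mul_pred_mod {p R : ℕ} (hp : 2 ≤ p) (hR : 1 ≤ R) : (p * R - 1) % p = p - 1 := by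
  obtain ⟨r, rfl⟩ : ∃ r, R = r + 1 := ⟨R - 1, by omega⟩
  have h5 : p * (r + 1) = p * r + p := by ring
  rw [show p * (r + 1) - 1 = p * r + (p - 1) by omega,
    Nat.mul_add_mod, Nat.mod_eq_of_lt (by omega)]

lemma lowc_eq_of_decomp {p N vv M : ℕ} (hp : 2 ≤ p) (hM : N = p ^ vv * M)
    (hv : vv = padicValNat p N) : lowc p N = M % p := by
  have hppos : 0 < p ^ vv := pow_pos (by omega : 0 < p) _
  have hdiv : N / p ^ vv = M := Nat.div_eq_of_eq_mul_left hppos (by rw [mul_comm]; exact hM)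
  unfold lowc dig
  rw [← hv, hdiv]

lemma dig_pred_of_lt_val {p N j : ℕ} [hpp : Fact p.Prime] (h1 : 1 ≤ N)
    (hj : j < padicValNat p N) : dig p (N - 1) j = p - 1 := by
  have hp := hpp.out.two_le
  obtain ⟨M, hM, hnd, hM1⟩ := pred_decomp (p := p) h1
  set vv := padicValNat p N with hv
  have hQ : N = p ^ j * (p * (p ^ (vv - j - 1) * M)) := by
    rw [hM]
    rw [show p ^ vv = p ^ j * (p * p ^ (vv - j - 1)) by
      rw [← pow_succ', ← pow_add]; congr 1; omega]
    ring
  have hRpos : 1 ≤ p ^ (vv - j - 1) * M :=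
    Nat.one_le_iff_ne_zero.mpr (by positivity)
  unfold dig
  rw [hQ, aux_mul_pred_div (pow_pos (by omega : 0 < p) _)
      (by nlinarith [Nat.one_le_two_pow (n := 0)]), aux_mul_pred_mod hp hRpos]

lemma dig_pred_val {p N : ℕ} [hpp : Fact p.Prime] (h1 : 1 ≤ N) :
    dig p (N - 1) (padicValNat p N) = lowc p N - 1 := by
  have hp := hpp.out.two_le
  obtain ⟨M, hM, hnd, hM1⟩ := pred_decomp (p := p) h1
  set vv := padicValNat p N with hv
  have hppos : 0 < p ^ vv := pow_pos (by omega : 0 < p) _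
  have hlow : lowc p N = M % p := lowc_eq_of_decomp hp hM hv
  have hmodne : M % p ≠ 0 := fun h => hnd (Nat.dvd_of_mod_eq_zero h)
  unfold dig
  rw [hlow, hM, aux_mul_pred_div hppos hM1]
  have h2 := Nat.mod_add_div M p
  rw [show M - 1 = p * (M / p) + (M % p - 1) by omega, Nat.mul_add_mod,
    Nat.mod_eq_of_lt (by have := Nat.mod_lt M (show 0 < p by omega); omega)]

lemma dig_pred_of_val_lt {p N j : ℕ} [hpp : Fact p.Prime] (h1 : 1 ≤ N)
    (hj : padicValNat p N < j) : dig p (N - 1) j = dig p N j := by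
  have hp := hpp.out.two_le
  obtain ⟨M, hM, hnd, hM1⟩ := pred_decomp (p := p) h1
  set vv := padicValNat p N with hv
  have hnotdvd : ¬ p ^ j ∣ N := by
    intro hdvd
    apply hnd
    have h2 : p ^ vv * p ^ (j - vv) ∣ p ^ vv * M := by
      rw [← pow_add, show vv + (j - vv) = j by omega, ← hM]; exact hdvd
    have h3 : p ^ (j - vv) ∣ M :=
      (Nat.mul_dvd_mul_iff_left (pow_pos (by omega : 0 < p) vv)).mp h2
    exact dvd_trans (dvd_pow_self p (by omega)) h3
  have hmod : N % p ^ j ≠ 0 := fun h => hnotdvd (Nat.dvd_of_mod_eq_zero h)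
  unfold dig
  rw [aux_pred_div (pow_pos (by omega : 0 < p) _) hmod]

section Wilson

variable {k : Type*} [Field k] {p : ℕ} [hpp : Fact p.Prime] [CharP k p]

lemma lowc_of_not_dvd {N : ℕ} (h : ¬ p ∣ N) : lowc p N = N % p := by
  unfold lowc dig
  rw [padicValNat.eq_zero_of_not_dvd h]
  simp

lemma lowc_p_mul (t : ℕ) (ht : 1 ≤ t) : lowc p (p * t) = lowc p t := by
  have hp := hpp.out.two_le
  have hv : padicValNat p (p * t) = padicValNat p t + 1 := by
    rw [padicValNat.mul (by omega) (by omega), padicValNat.self (by omega)]; omega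
  unfold lowc dig
  rw [hv, pow_succ', Nat.mul_div_mul_left _ _ (by omega : 0 < p)]

lemma lowc_pow (i : ℕ) : lowc p (p ^ i) = 1 := by
  have hp := hpp.out.two_le
  unfold lowc dig
  rw [padicValNat.prime_pow, Nat.div_self (pow_pos (by omega : 0 < p) _),
    Nat.mod_eq_of_lt (by omega)]

lemma wilson_block (hp : 2 < p) : ∏ r ∈ Ico 1 p, (r : k) = -1 := by
  have h1 : ∏ r ∈ Ico 1 p, (r : k) = ((∏ r ∈ Ico 1 p, r : ℕ) : k) := by
    rw [Nat.cast_prod]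
  rw [h1, show p = (p - 1) + 1 by omega, Finset.prod_Ico_id_eq_factorial]
  have h2 : (((p - 1).factorial : ℕ) : k) =
      (ZMod.castHom (dvd_refl p) k) (((p - 1).factorial : ℕ) : ZMod p) := by
    rw [map_natCast]
  rw [h2, ZMod.wilsons_lemma, map_neg, map_one]

lemma F_mul (hp : 2 < p) (t : ℕ) (ht : 1 ≤ t) :
    ∏ K ∈ Ico 1 (p * t), (lowc p K : k) = (-1) ^ t * ∏ K ∈ Ico 1 t, (lowc p K : k) := by
  induction t, ht using Nat.le_induction with
  | base =>
    rw [mul_one, pow_one]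
    have : ∀ K ∈ Ico 1 p, (lowc p K : k) = (K : k) := by
      intro K hK
      simp only [mem_Ico] at hK
      rw [lowc_of_not_dvd (by intro hd; have := Nat.le_of_dvd (by omega) hd; omega),
        Nat.mod_eq_of_lt hK.2]
    rw [Finset.prod_congr rfl this, wilson_block hp]
    simp
  | succ t ht ih =>
    have hpt : 1 ≤ p * t := by nlinarith
    have hsplit : (∏ K ∈ Ico 1 (p * t), (lowc p K : k)) * ∏ K ∈ Ico (p * t) (p * (t + 1)), (lowc p K : k)
        = ∏ K ∈ Ico 1 (p * (t + 1)), (lowc p K : k) :=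
      Finset.prod_Ico_consecutive _ (by omega) (by nlinarith)
    have hblock : ∏ K ∈ Ico (p * t) (p * (t + 1)), (lowc p K : k)
        = (lowc p t : k) * (-1) := by
      rw [show p * (t + 1) = p * t + p by ring]
      rw [Finset.prod_eq_prod_Ico_succ_bot (show p * t < p * t + p by omega)
        (fun K => (lowc p K : k))]
      rw [lowc_p_mul t ht]
      congr 1
      have h3 : ∀ K ∈ Ico (p * t + 1) (p * t + p), (lowc p K : k) = ((K - p * t : ℕ) : k) := by
        intro K hK
        simp only [mem_Ico] at hK
        obtain ⟨r, rfl, hr2, hr3⟩ : ∃ r, K = p * t + r ∧ 1 ≤ r ∧ r < p :=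
          ⟨K - p * t, by omega, by omega, by omega⟩
        have hKmod : (p * t + r) % p = r := by
          rw [Nat.mul_add_mod]; exact Nat.mod_eq_of_lt hr3
        rw [lowc_of_not_dvd (by
          intro hd
          obtain ⟨s, hs⟩ := hd
          have h4 : (p * t + r) % p = 0 := by rw [hs, Nat.mul_mod_right]
          omega), hKmod]
        congr 1
        omega
      rw [Finset.prod_congr rfl h3]
      rw [Finset.prod_Ico_eq_prod_range]
      have h5 : ∀ i ∈ range (p * t + p - (p * t + 1)), ((p * t + 1 + i - p * t : ℕ) : k) = ((1 + i : ℕ) : k) := by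
        intro i _; congr 1; omega
      rw [Finset.prod_congr rfl h5]
      have h6 : ∏ r ∈ Ico 1 p, (r : k) = ∏ i ∈ range (p - 1), ((1 + i : ℕ) : k) := by
        rw [Finset.prod_Ico_eq_prod_range]
      rw [show p * t + p - (p * t + 1) = p - 1 by omega, ← h6, wilson_block hp]
    rw [← hsplit, ih, hblock, Finset.prod_Ico_succ_top (by omega)]
    push_cast
    ring

lemma F_pow (hp : 2 < p) (j : ℕ) : ∏ K ∈ Ico 1 (p ^ j), (lowc p K : k) = (-1) ^ j := by
  induction j with
  | zero => simp
  | succ j ih =>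
    rw [pow_succ, mul_comm (p ^ j) p, F_mul hp _ (Nat.one_le_pow _ _ (by have := hpp.out.two_le; omega)), ih]
    have hodd : Odd (p ^ j) := (hpp.out.odd_of_ne_two (by omega)).pow
    rw [hodd.neg_one_pow]
    ring

lemma mu_formula (hp : 2 < p) {m i : ℕ} (hi : i < m) :
    ∏ K ∈ Ico (p ^ i + 1) (p ^ m), (lowc p K : k) = (-1) ^ (m - i) := by
  have hpi : 1 ≤ p ^ i := Nat.one_le_pow _ _ (by omega)
  have hlt : p ^ i < p ^ m := Nat.pow_lt_pow_right (by omega) hi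
  have hsplit : (∏ K ∈ Ico 1 (p ^ i + 1), (lowc p K : k)) * ∏ K ∈ Ico (p ^ i + 1) (p ^ m), (lowc p K : k)
      = ∏ K ∈ Ico 1 (p ^ m), (lowc p K : k) :=
    Finset.prod_Ico_consecutive _ (by omega) (by omega)
  rw [Finset.prod_Ico_succ_top (by omega), F_pow hp, lowc_pow, Nat.cast_one, mul_one, F_pow hp]
    at hsplit
  have hne : ((-1 : k) ^ i) ≠ 0 := pow_ne_zero _ (by norm_num)
  apply mul_left_cancel₀ hne
  rw [hsplit, ← pow_add]
  congr 1
  omega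

end Wilson

section Ring

set_option linter.unusedSectionVars false

variable {k : Type*} [Field k] {B : Type*} [CommRing B] [Algebra k B]
variable {p m : ℕ} [hpp : Fact p.Prime] [CharP k p] {x : Fin m → B}

/-- the monomial with exponents the base-`p` digits of `N` -/
def v (p : ℕ) (x : Fin m → B) (N : ℕ) : B := ∏ i, x i ^ dig p N i

lemma xpow_zero (hx0 : ∀ i, x i ^ p = 0) {i : Fin m} {e : ℕ} (he : p ≤ e) : x i ^ e = 0 := by
  rw [show e = p + (e - p) by omega, pow_add, hx0, zero_mul]

lemma dsum_apply {ι : Type*} (s : Finset ι) (Ds : ι → Derivation k B B) (b : B) :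
    (∑ i ∈ s, Ds i) b = ∑ i ∈ s, Ds i b := by
  induction s using Finset.cons_induction with
  | empty => simp
  | cons a s ha ih => rw [Finset.sum_cons, Derivation.add_apply, ih, Finset.sum_cons]

lemma deriv_prod (D : Derivation k B B) (s : Finset (Fin m)) (f : Fin m → B) :
    D (∏ j ∈ s, f j) = ∑ j ∈ s, (∏ l ∈ s.erase j, f l) * D (f j) := by
  classical
  induction s using Finset.induction_on with
  | empty => simp
  | @insert a s ha ih =>
    rw [Finset.prod_insert ha, Derivation.leibniz, ih, Finset.sum_insert ha,
      Finset.erase_insert ha]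
    simp only [smul_eq_mul, Finset.mul_sum]
    have h2 : ∀ j ∈ s, f a * ((∏ l ∈ s.erase j, f l) * D (f j))
        = (∏ l ∈ (insert a s).erase j, f l) * D (f j) := by
      intro j hj
      rw [Finset.erase_insert_of_ne (by rintro rfl; exact ha hj),
        Finset.prod_insert (fun hmem => ha (Finset.mem_of_mem_erase hmem)), mul_assoc]
    rw [Finset.sum_congr rfl h2]
    ring

lemma Dv (D : Fin m → Derivation k B B) (hD : ∀ i j, D i (x j) = if i = j then 1 else 0)
    (i : Fin m) (N : ℕ) :
    D i (v p x N) = dig p N (i : ℕ) •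
      ((∏ l ∈ univ.erase i, x l ^ dig p N (l : ℕ)) * x i ^ (dig p N (i : ℕ) - 1)) := by
  unfold v
  rw [deriv_prod]
  rw [Finset.sum_eq_single i]
  · rw [Derivation.leibniz_pow, hD, if_pos rfl, smul_eq_mul, mul_one, mul_smul_comm]
  · intro j _ hji
    rw [Derivation.leibniz_pow, hD, if_neg (fun h => hji h.symm), smul_zero, smul_zero, mul_zero]
  · intro h; exact absurd (mem_univ i) h

lemma tri_erase (f : Fin m → B) (i : Fin m) :
    ∏ j ∈ univ.erase i, f j =
      (∏ j ∈ univ.filter (fun j => j < i), f j) * ∏ j ∈ univ.filter (fun j => i < j), f j := by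
  rw [← Finset.prod_filter_mul_prod_filter_not (univ.erase i) (fun j => j < i)]
  congr 1
  · apply Finset.prod_congr _ (fun _ _ => rfl)
    ext j
    simp only [mem_filter, mem_erase, mem_univ, true_and, and_true]
    constructor
    · rintro ⟨hne, hlt⟩; exact hlt
    · intro hlt; exact ⟨ne_of_lt hlt, hlt⟩
  · apply Finset.prod_congr _ (fun _ _ => rfl)
    ext j
    simp only [mem_filter, mem_erase, mem_univ, true_and, and_true, Fin.lt_def, Fin.ext_iff]
    omega

lemma tri (f : Fin m → B) (i : Fin m) :
    ∏ j, f j = (∏ j ∈ univ.filter (fun j => j < i), f j) *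
      (f i * ∏ j ∈ univ.filter (fun j => i < j), f j) := by
  rw [← Finset.mul_prod_erase univ f (mem_univ i), tri_erase]
  ring

/-- Action of the Δ part on monomials. -/
lemma Delta_action (hx0 : ∀ i, x i ^ p = 0) {D : Fin m → Derivation k B B}
    (hD : ∀ i j, D i (x j) = if i = j then 1 else 0)
    (N : ℕ) (h1 : 1 ≤ N) (h2 : N < p ^ m) :
    (∑ i : Fin m,
        (∏ j ∈ Finset.univ.filter (fun j : Fin m => j < i), x j ^ (p - 1)) • D i :
        Derivation k B B) (v p x N) = (lowc p N : k) • v p x (N - 1) := by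
  have hp2 := hpp.out.two_le
  have hvm : padicValNat p N < m := val_lt h1 h2
  have hlow := lowc_pos (p := p) h1
  set i0 : Fin m := ⟨padicValNat p N, hvm⟩ with hi0
  have hi0v : (i0 : ℕ) = padicValNat p N := rfl
  rw [dsum_apply]
  have hsmul : ∀ i : Fin m,
      ((∏ j ∈ Finset.univ.filter (fun j : Fin m => j < i), x j ^ (p - 1)) • D i) (v p x N)
      = (∏ j ∈ Finset.univ.filter (fun j : Fin m => j < i), x j ^ (p - 1)) * D i (v p x N) := by
    intro i; simp
  rw [Finset.sum_congr rfl (fun i _ => hsmul i)]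
  rw [Finset.sum_eq_single i0]
  · -- the i0 term
    rw [Dv D hD, hi0v]
    rw [dig_val_eq_lowc, Nat.cast_smul_eq_nsmul, mul_smul_comm]
    congr 1
    -- product identity
    rw [tri_erase]
    have hone : ∏ l ∈ univ.filter (fun l => l < i0), x l ^ dig p N (l : ℕ) = 1 := by
      apply Finset.prod_eq_one
      intro l hl
      simp only [mem_filter, mem_univ, true_and, Fin.lt_def] at hl
      rw [dig_of_lt_val h1 hl, pow_zero]
    rw [hone, one_mul]
    rw [show v p x (N - 1) = ∏ l, x l ^ dig p (N - 1) (l : ℕ) from rfl, tri _ i0]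
    have ha : ∏ l ∈ univ.filter (fun l => l < i0), x l ^ dig p (N - 1) (l : ℕ)
        = ∏ l ∈ univ.filter (fun l => l < i0), x l ^ (p - 1) := by
      apply Finset.prod_congr rfl
      intro l hl
      simp only [mem_filter, mem_univ, true_and, Fin.lt_def] at hl
      rw [dig_pred_of_lt_val h1 hl]
    have hb : ∏ l ∈ univ.filter (fun l => i0 < l), x l ^ dig p (N - 1) (l : ℕ)
        = ∏ l ∈ univ.filter (fun l => i0 < l), x l ^ dig p N (l : ℕ) := by
      apply Finset.prod_congr rfl
      intro l hl
      simp only [mem_filter, mem_univ, true_and, Fin.lt_def] at hl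
      rw [dig_pred_of_val_lt h1 hl]
    rw [ha, hb, hi0v, dig_pred_val h1]
    ring
  · -- other terms vanish
    intro j _ hji
    rcases Nat.lt_or_ge (j : ℕ) (padicValNat p N) with hj | hj
    · rw [Dv D hD, dig_of_lt_val h1 hj, zero_smul, mul_zero]
    · have hj' : padicValNat p N < (j : ℕ) := by
        rcases Nat.eq_or_lt_of_le hj with h | h
        · exfalso; apply hji; apply Fin.ext; rw [hi0v]; omega
        · omega
      rw [Dv D hD, mul_smul_comm]
      suffices hsuf : (∏ l ∈ Finset.univ.filter (fun l : Fin m => l < j), x l ^ (p - 1)) *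
          ((∏ l ∈ univ.erase j, x l ^ dig p N (l : ℕ)) * x j ^ (dig p N (j : ℕ) - 1)) = 0 by
        rw [hsuf, smul_zero]
      have hm1 : i0 ∈ Finset.univ.filter (fun l : Fin m => l < j) := by
        simp only [mem_filter, mem_univ, true_and, Fin.lt_def, hi0v]; omega
      have hm2 : i0 ∈ univ.erase j := by
        simp only [mem_erase, mem_univ, and_true, Ne, Fin.ext_iff, hi0v]
        omega
      rw [← Finset.mul_prod_erase _ _ hm1, ← Finset.mul_prod_erase _ _ hm2]
      rw [show (x i0 ^ (p - 1) * ∏ l ∈ (Finset.univ.filter (fun l : Fin m => l < j)).erase i0, x l ^ (p - 1)) *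
          ((x i0 ^ dig p N (i0 : ℕ) * ∏ l ∈ (univ.erase j).erase i0, x l ^ dig p N (l : ℕ)) *
            x j ^ (dig p N (j : ℕ) - 1))
          = (x i0 ^ (p - 1) * x i0 ^ dig p N (i0 : ℕ)) *
            ((∏ l ∈ (Finset.univ.filter (fun l : Fin m => l < j)).erase i0, x l ^ (p - 1)) *
              ((∏ l ∈ (univ.erase j).erase i0, x l ^ dig p N (l : ℕ)) *
                x j ^ (dig p N (j : ℕ) - 1))) by ring]
      rw [← pow_add, xpow_zero hx0 (by rw [hi0v, dig_val_eq_lowc]; omega), zero_mul]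
  · intro h; exact absurd (mem_univ i0) h

/-- Action of the top monomial times `D i` on monomials. -/
lemma E_term (hx0 : ∀ i, x i ^ p = 0) {D : Fin m → Derivation k B B}
    (hD : ∀ i j, D i (x j) = if i = j then 1 else 0)
    (i : Fin m) (N : ℕ) (h2 : N < p ^ m) :
    (∏ j, x j ^ (p - 1)) * D i (v p x N) =
      if N = p ^ (i : ℕ) then v p x (p ^ m - 1) else 0 := by
  have hp2 := hpp.out.two_le
  have htop : v p x (p ^ m - 1) = ∏ j, x j ^ (p - 1) := by
    unfold v
    apply Finset.prod_congr rfl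
    intro j _
    rw [dig_top (by omega) j.isLt]
  rcases Nat.lt_or_ge (dig p N (i : ℕ)) 1 with hc | hc
  · -- digit zero
    have hne : N ≠ p ^ (i : ℕ) := by
      intro h; rw [h, dig_pow (by omega)] at hc; simp at hc
    rw [if_neg hne, Dv D hD, show dig p N (i : ℕ) = 0 by omega, zero_smul, mul_zero]
  rcases Nat.lt_or_ge 1 (dig p N (i : ℕ)) with hc2 | hc2
  · -- digit ≥ 2
    have hne : N ≠ p ^ (i : ℕ) := by
      intro h; rw [h, dig_pow (by omega)] at hc2; simp at hc2
    rw [if_neg hne, Dv D hD, mul_smul_comm]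
    suffices hsuf : (∏ j, x j ^ (p - 1)) *
        ((∏ l ∈ univ.erase i, x l ^ dig p N (l : ℕ)) * x i ^ (dig p N (i : ℕ) - 1)) = 0 by
      rw [hsuf, smul_zero]
    rw [← Finset.mul_prod_erase univ _ (mem_univ i)]
    rw [show (x i ^ (p - 1) * ∏ l ∈ univ.erase i, x l ^ (p - 1)) *
        ((∏ l ∈ univ.erase i, x l ^ dig p N (l : ℕ)) * x i ^ (dig p N (i : ℕ) - 1))
        = (x i ^ (p - 1) * x i ^ (dig p N (i : ℕ) - 1)) *
          ((∏ l ∈ univ.erase i, x l ^ (p - 1)) * ∏ l ∈ univ.erase i, x l ^ dig p N (l : ℕ)) by ring]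
    rw [← pow_add, xpow_zero hx0 (by omega), zero_mul]
  have hone : dig p N (i : ℕ) = 1 := by omega
  by_cases hall : ∀ l : Fin m, l ≠ i → dig p N (l : ℕ) = 0
  · -- N = p ^ i
    have hNeq : N = p ^ (i : ℕ) := by
      have hds := digit_sum (show 1 < p by omega) m N h2
      rw [Finset.sum_eq_single (i : ℕ)] at hds
      · rw [hone, one_mul] at hds; omega
      · intro j hj hji
        simp only [Finset.mem_range] at hj
        rw [hall ⟨j, hj⟩ (by simp only [Ne, Fin.ext_iff]; exact hji)]
        simp
      · intro h; exact absurd (Finset.mem_range.mpr i.isLt) h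
    rw [if_pos hNeq, Dv D hD, hone, one_smul]
    have herase : ∏ l ∈ univ.erase i, x l ^ dig p N (l : ℕ) = 1 :=
      Finset.prod_eq_one (fun l hl => by
        rw [hall l (Finset.ne_of_mem_erase hl), pow_zero])
    rw [herase, one_mul, show (1:ℕ) - 1 = 0 from rfl, pow_zero, mul_one, htop]
  · push_neg at hall
    obtain ⟨l0, hl0ne, hl0⟩ := hall
    have hne : N ≠ p ^ (i : ℕ) := by
      intro h
      rw [h, dig_pow (by omega)] at hl0
      simp only [Ne, Fin.ext_iff] at hl0ne
      rw [if_neg (by omega)] at hl0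
      exact hl0 rfl
    rw [if_neg hne, Dv D hD, hone, one_smul]
    have hm2 : l0 ∈ univ.erase i := by simp [hl0ne]
    rw [← Finset.mul_prod_erase univ _ (mem_univ l0), ← Finset.mul_prod_erase _ _ hm2]
    rw [show (x l0 ^ (p - 1) * ∏ l ∈ univ.erase l0, x l ^ (p - 1)) *
        ((x l0 ^ dig p N (l0 : ℕ) * ∏ l ∈ (univ.erase i).erase l0, x l ^ dig p N (l : ℕ)) *
          x i ^ (1 - 1))
        = (x l0 ^ (p - 1) * x l0 ^ dig p N (l0 : ℕ)) *
          ((∏ l ∈ univ.erase l0, x l ^ (p - 1)) *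
            ((∏ l ∈ (univ.erase i).erase l0, x l ^ dig p N (l : ℕ)) * x i ^ (1 - 1))) by ring]
    rw [← pow_add, xpow_zero hx0 (by
      have h3 : 1 ≤ dig p N (l0 : ℕ) := by omega
      omega), zero_mul]

end Ring

end AQD

open Finset Polynomial

set_option maxHeartbeats 1000000 in
open AQD in
/-- The adjoint quotient map evaluated at `Δ_ε` gives exactly `ε`: the coefficients of the
minimal (equal to characteristic) `p`-polynomial of `Δ_ε` satisfy `φ'_i(Δ_ε) = ε_{i+1}` for
`i = 0,...,n−2`, i.e. `Δ_ε^{p^{n-1}} = Σ_{i=0}^{n-2} ε_{i+1} Δ_ε^{p^i}`.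
Here `m` plays the role of `n − 1` and `ε` is indexed from `0`. -/
theorem adjoint_quotient_at_Delta_eps
    (k : Type*) [Field k] [IsAlgClosed k] (p m : ℕ) [Fact (Nat.Prime p)] [CharP k p]
    (hp : 3 < p) (hm : 2 ≤ m)
    (B : Type*) [CommRing B] [Algebra k B] [Module.Finite k B]
    (e : (MvPolynomial (Fin m) k ⧸
        Ideal.span (Set.range fun i : Fin m =>
          (MvPolynomial.X i : MvPolynomial (Fin m) k) ^ p)) ≃ₐ[k] B)
    (x : Fin m → B) (hx : ∀ j, x j = e (Ideal.Quotient.mk _ (MvPolynomial.X j)))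
    (D : Fin m → Derivation k B B) (hD : ∀ i j, D i (x j) = if i = j then 1 else 0)
    (φ' : Fin m → Derivation k B B → k)
    (hφ' : ∀ y : Derivation k B B,
      LinearMap.charpoly (y : B →ₗ[k] B) =
        X ^ (p ^ m) - ∑ i : Fin m, C (φ' i y) * X ^ (p ^ (i : ℕ)))
    (ε : Fin m → k)
    (Δε : Derivation k B B)
    (hΔε : Δε = (∑ i : Fin m,
        (∏ j ∈ Finset.univ.filter (fun j : Fin m => j < i), x j ^ (p - 1)) • D i)
      + ∑ i : Fin m, ((-1 : k) ^ (m - (i : ℕ)) * ε i) • ((∏ j : Fin m, x j ^ (p - 1)) • D i)) :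
    (∀ i : Fin m, φ' i Δε = ε i) ∧
      (Δε : B →ₗ[k] B) ^ (p ^ m) =
        ∑ i : Fin m, ε i • ((Δε : B →ₗ[k] B)) ^ (p ^ (i : ℕ)) := by
  classical
  have hp2 : 2 ≤ p := by omega
  set n := p ^ m with hn
  -- basic inequalities
  have hpow_le : ∀ i : Fin m, p ^ (i : ℕ) ≤ p ^ (m - 1) :=
    fun i => Nat.pow_le_pow_right (by omega) (by omega)
  have hpm1 : p ^ (m - 1) * p = n := by
    rw [hn, ← pow_succ]; congr 1; omega
  have h2pm : 2 * p ^ (m - 1) < n := by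
    have h1 : 1 ≤ p ^ (m - 1) := Nat.one_le_pow _ _ (by omega)
    nlinarith
  have hn1 : 1 ≤ n := Nat.one_le_pow _ _ (by omega)
  have hppow_lt : ∀ i : Fin m, p ^ (i : ℕ) < n := by
    intro i; have := hpow_le i; omega
  have hppow1 : ∀ i : Fin m, 1 ≤ p ^ (i : ℕ) := fun i => Nat.one_le_pow _ _ (by omega)
  -- x i ^ p = 0
  have hx0 : ∀ i, x i ^ p = 0 := by
    intro i
    rw [hx i, ← map_pow, ← map_pow]
    have hmem : (MvPolynomial.X i : MvPolynomial (Fin m) k) ^ p ∈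
        Ideal.span (Set.range fun i : Fin m =>
          (MvPolynomial.X i : MvPolynomial (Fin m) k) ^ p) :=
      Ideal.subset_span ⟨i, rfl⟩
    rw [Ideal.Quotient.eq_zero_iff_mem.mpr hmem, map_zero]
  -- finrank
  have hfinrank : Module.finrank k B = n := by
    have h0 := hφ' 0
    rw [Derivation.coe_zero_linearMap] at h0
    have hdeg : ((0 : B →ₗ[k] B).charpoly).natDegree = Module.finrank k B :=
      LinearMap.charpoly_natDegree _
    rw [h0] at hdeg
    rw [← hdeg]
    have hS : (∑ i : Fin m, C (φ' i 0) * X ^ (p ^ (i : ℕ))).natDegree < n := by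
      apply lt_of_le_of_lt (Polynomial.natDegree_sum_le_of_forall_le univ _
        (fun i _ => ?_) : _ ≤ p ^ (m - 1))
      · omega
      · exact le_trans (Polynomial.natDegree_C_mul_le _ _)
          (by rw [Polynomial.natDegree_X_pow]; exact hpow_le i)
    rw [Polynomial.natDegree_sub_eq_left_of_natDegree_lt
      (by rwa [Polynomial.natDegree_X_pow]), Polynomial.natDegree_X_pow]
  -- the monomial family
  set V : Fin n → B := fun N => v p x (N : ℕ) with hV
  have hspan : ⊤ ≤ Submodule.span k (Set.range V) := by
    have haev : ∀ b : B, ∃ P : MvPolynomial (Fin m) k, MvPolynomial.aeval x P = b := by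
      intro b
      obtain ⟨q, hq⟩ := Ideal.Quotient.mk_surjective (e.symm b)
      refine ⟨q, ?_⟩
      have hhom : MvPolynomial.aeval x =
          (e.toAlgHom.comp (Ideal.Quotient.mkₐ k (Ideal.span (Set.range fun i : Fin m =>
            (MvPolynomial.X i : MvPolynomial (Fin m) k) ^ p)))) := by
        apply MvPolynomial.algHom_ext
        intro i
        simp only [MvPolynomial.aeval_X, AlgHom.coe_comp, Function.comp_apply,
          Ideal.Quotient.mkₐ_eq_mk, AlgEquiv.toAlgHom_eq_coe, AlgHom.coe_coe]
        exact hx i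
      rw [hhom]
      simp only [AlgHom.coe_comp, Function.comp_apply, Ideal.Quotient.mkₐ_eq_mk,
        AlgEquiv.toAlgHom_eq_coe, AlgHom.coe_coe]
      rw [hq]; exact e.apply_symm_apply b
    have honemem : (1 : B) ∈ Submodule.span k (Set.range V) := by
      apply Submodule.subset_span
      refine ⟨⟨0, by omega⟩, ?_⟩
      rw [hV]
      show v p x 0 = 1
      apply Finset.prod_eq_one
      intro l _
      simp [AQD.dig]
    have hmulx : ∀ z, z ∈ Submodule.span k (Set.range V) → ∀ i : Fin m,
        z * x i ∈ Submodule.span k (Set.range V) := by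
      intro z hz i
      induction hz using Submodule.span_induction with
      | mem w hw =>
        obtain ⟨N, rfl⟩ := hw
        by_cases hd : dig p (N : ℕ) (i : ℕ) = p - 1
        · have hzero : V N * x i = 0 := by
            rw [hV]
            show v p x (N : ℕ) * x i = 0
            rw [show v p x (N : ℕ) = ∏ l, x l ^ dig p (N : ℕ) (l : ℕ) from rfl,
              ← Finset.mul_prod_erase univ _ (mem_univ i)]
            rw [show (x i ^ dig p (N : ℕ) (i : ℕ) *
                ∏ l ∈ univ.erase i, x l ^ dig p (N : ℕ) (l : ℕ)) * x i
              = x i ^ (dig p (N : ℕ) (i : ℕ) + 1) *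
                ∏ l ∈ univ.erase i, x l ^ dig p (N : ℕ) (l : ℕ) by rw [pow_succ]; ring]
            rw [show dig p (N : ℕ) (i : ℕ) + 1 = p by omega, hx0, zero_mul]
          rw [hzero]
          exact Submodule.zero_mem _
        · set b : ℕ → ℕ := fun j => dig p (N : ℕ) j + (if j = (i : ℕ) then 1 else 0)
            with hb
          have hblt : ∀ j, j < m → b j < p := by
            intro j hj
            have hdl := dig_lt (show 1 < p by omega) (N : ℕ) j
            have hbj : b j = dig p (N : ℕ) j + (if j = (i : ℕ) then 1 else 0) := rfl
            rw [hbj]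
            by_cases hji : j = (i : ℕ)
            · rw [if_pos hji]; subst hji; omega
            · rw [if_neg hji]; omega
          have hK : ∑ j ∈ range m, b j * p ^ j < n :=
            sum_digits_lt (by omega) m b hblt
          have hdigK : ∀ j, j < m → dig p (∑ j ∈ range m, b j * p ^ j) j = b j :=
            dig_sum_digits (by omega) m b hblt
          have heq : V N * x i = V ⟨∑ j ∈ range m, b j * p ^ j, hK⟩ := by
            rw [hV]
            show v p x (N : ℕ) * x i = v p x (∑ j ∈ range m, b j * p ^ j)
            rw [show v p x (∑ j ∈ range m, b j * p ^ j)
                = ∏ l, x l ^ dig p (∑ j ∈ range m, b j * p ^ j) (l : ℕ) from rfl]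
            rw [Finset.prod_congr rfl (fun l _ => by rw [hdigK (l : ℕ) l.isLt])]
            rw [show v p x (N : ℕ) = ∏ l, x l ^ dig p (N : ℕ) (l : ℕ) from rfl]
            rw [← Finset.mul_prod_erase univ (fun l => x l ^ b (l : ℕ)) (mem_univ i),
              ← Finset.mul_prod_erase univ _ (mem_univ i)]
            have hbi : b (i : ℕ) = dig p (N : ℕ) (i : ℕ) + 1 := by
              rw [hb]; simp
            have hbl : ∀ l ∈ univ.erase i, x l ^ b (l : ℕ) = x l ^ dig p (N : ℕ) (l : ℕ) := by
              intro l hl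
              have hlne : (l : ℕ) ≠ (i : ℕ) := by
                have := Finset.ne_of_mem_erase hl
                simp only [Ne, Fin.ext_iff] at this ⊢
                exact this
              rw [hb]
              simp only [if_neg hlne, add_zero]
            rw [Finset.prod_congr rfl hbl, hbi, pow_succ]
            ring
          rw [heq]
          exact Submodule.subset_span ⟨_, rfl⟩
      | zero => rw [zero_mul]; exact Submodule.zero_mem _
      | add z1 z2 h1 h2 ih1 ih2 => rw [add_mul]; exact Submodule.add_mem _ ih1 ih2
      | smul c z hz ih => rw [smul_mul_assoc]; exact Submodule.smul_mem _ _ ih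
    intro b hbtop
    obtain ⟨P, rfl⟩ := haev b
    clear hbtop
    induction P using MvPolynomial.induction_on with
    | C a =>
      rw [MvPolynomial.aeval_C, Algebra.algebraMap_eq_smul_one]
      exact Submodule.smul_mem _ _ honemem
    | add P Q hP hQ =>
      rw [map_add]
      exact Submodule.add_mem _ hP hQ
    | mul_X P i hP =>
      rw [map_mul, MvPolynomial.aeval_X]
      exact hmulx _ hP i
  have hcard : Fintype.card (Fin n) = Module.finrank k B := by
    rw [Fintype.card_fin, hfinrank]
  have hLI : LinearIndependent k V := by
    have := (basisOfTopLeSpanOfCardEqFinrank V hspan hcard).linearIndependent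
    rwa [coe_basisOfTopLeSpanOfCardEqFinrank] at this
  -- operator
  set T : B →ₗ[k] B := (Δε : B →ₗ[k] B) with hTdef
  set s : Fin m → k := fun i => (-1 : k) ^ (m - (i : ℕ)) * ε i with hs
  -- action on monomials
  have hT0 : T (v p x 0) = 0 := by
    have h1 : v p x 0 = 1 := by
      apply Finset.prod_eq_one
      intro i _
      simp [AQD.dig]
    rw [h1]
    show Δε (1 : B) = 0
    exact Δε.map_one_eq_zero
  have hTact : ∀ N, 1 ≤ N → N < n → T (v p x N) =
      (lowc p N : k) • v p x (N - 1) +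
        (∑ i : Fin m, if N = p ^ (i : ℕ) then s i else 0) • v p x (n - 1) := by
    intro N h1 h2
    have happ : T (v p x N) =
        (∑ i : Fin m,
          (∏ j ∈ Finset.univ.filter (fun j : Fin m => j < i), x j ^ (p - 1)) • D i :
          Derivation k B B) (v p x N)
        + (∑ i : Fin m, s i • ((∏ j : Fin m, x j ^ (p - 1)) • D i) :
          Derivation k B B) (v p x N) := by
      show Δε (v p x N) = _
      rw [hΔε]
      rfl
    rw [happ, Delta_action hx0 hD N h1 h2, dsum_apply]
    congr 1
    have hterm : ∀ i : Fin m, (s i • ((∏ j : Fin m, x j ^ (p - 1)) • D i)) (v p x N)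
        = (if N = p ^ (i : ℕ) then s i else 0) • v p x (n - 1) := by
      intro i
      rw [Derivation.smul_apply, Derivation.smul_apply, smul_eq_mul,
        E_term hx0 hD i N h2]
      by_cases hNi : N = p ^ (i : ℕ)
      · rw [if_pos hNi, if_pos hNi]
      · rw [if_neg hNi, if_neg hNi, smul_zero, zero_smul]
    rw [Finset.sum_congr rfl (fun i _ => hterm i), ← Finset.sum_smul]
  -- no-injection version
  have hTact' : ∀ N, 1 ≤ N → N < n → (∀ i : Fin m, N ≠ p ^ (i : ℕ)) →
      T (v p x N) = (lowc p N : k) • v p x (N - 1) := by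
    intro N h1 h2 h3
    rw [hTact N h1 h2]
    rw [Finset.sum_eq_zero (fun i _ => if_neg (h3 i)), zero_smul, add_zero]
  -- chain scalars
  set μ : ℕ → k := fun t => ∏ K ∈ Ico (n - t) n, (lowc p K : k) with hμ
  have hμ0 : μ 0 = 1 := by simp [hμ]
  have hμrec : ∀ t, t + 1 ≤ n → μ (t + 1) = (lowc p (n - 1 - t) : k) * μ t := by
    intro t ht
    rw [hμ]
    simp only
    rw [show n - (t + 1) = n - 1 - t by omega,
      Finset.prod_eq_prod_Ico_succ_bot (show n - 1 - t < n by omega),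
      show n - 1 - t + 1 = n - t by omega]
  have hμne : ∀ t, t ≤ n - 1 → μ t ≠ 0 := by
    intro t ht
    rw [hμ]
    simp only
    rw [Finset.prod_ne_zero_iff]
    intro K hK
    simp only [mem_Ico] at hK
    have hK1 : 1 ≤ K := by omega
    have hlow := lowc_pos (p := p) hK1
    intro h0
    rw [CharP.cast_eq_zero_iff k p] at h0
    exact absurd (Nat.le_of_dvd (by omega) h0) (by omega)
  -- iterates
  set f : ℕ → B := fun j => (T ^ j) (v p x (n - 1)) with hf
  have hf0 : f 0 = v p x (n - 1) := by simp [hf]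
  have hfrec : ∀ j, f (j + 1) = T (f j) := by
    intro j
    rw [hf]
    simp only
    rw [pow_succ']
    rfl
  -- closed form for the iterates
  have key : ∀ j, j ≤ n - 1 → f j = μ j • v p x (n - 1 - j) +
      ∑ i : Fin m, (if n ≤ p ^ (i : ℕ) + j
          then s i * μ (n - 1 - p ^ (i : ℕ)) * μ (j + p ^ (i : ℕ) - n) else 0) •
        v p x (n - 1 - (j + p ^ (i : ℕ) - n)) := by
    intro j
    induction j with
    | zero =>
      intro _
      rw [hf0, hμ0, one_smul, Nat.sub_zero]
      rw [Finset.sum_eq_zero (fun i _ => by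
        rw [if_neg (by have := hppow_lt i; omega), zero_smul]), add_zero]
    | succ j ih =>
      intro hj1
      have hj : j ≤ n - 1 := by omega
      rw [hfrec j, ih hj, map_add, map_smul, map_sum]
      rw [hTact (n - 1 - j) (by omega) (by omega)]
      have hstep : ∀ i : Fin m,
          (if n ≤ p ^ (i : ℕ) + (j + 1)
              then s i * μ (n - 1 - p ^ (i : ℕ)) * μ (j + 1 + p ^ (i : ℕ) - n) else 0) •
            v p x (n - 1 - (j + 1 + p ^ (i : ℕ) - n))
          = T ((if n ≤ p ^ (i : ℕ) + j
              then s i * μ (n - 1 - p ^ (i : ℕ)) * μ (j + p ^ (i : ℕ) - n) else 0) •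
            v p x (n - 1 - (j + p ^ (i : ℕ) - n)))
            + (if n - 1 - j = p ^ (i : ℕ) then μ j * s i else 0) • v p x (n - 1) := by
        intro i
        have hpil := hppow_lt i
        have hpi1 := hppow1 i
        rw [map_smul]
        by_cases hc1 : n ≤ p ^ (i : ℕ) + j
        · have hc2 : n ≤ p ^ (i : ℕ) + (j + 1) := by omega
          have hnonew : ¬ (n - 1 - j = p ^ (i : ℕ)) := by omega
          rw [if_pos hc1, if_pos hc2, if_neg hnonew, zero_smul, add_zero]
          have ht : j + p ^ (i : ℕ) - n ≤ p ^ (i : ℕ) - 1 := by omega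
          have hN1 : 1 ≤ n - 1 - (j + p ^ (i : ℕ) - n) := by
            have := hpow_le i; omega
          have hN2 : n - 1 - (j + p ^ (i : ℕ) - n) < n := by omega
          have hnopow : ∀ i' : Fin m, n - 1 - (j + p ^ (i : ℕ) - n) ≠ p ^ (i' : ℕ) := by
            intro i'
            have h1 := hpow_le i; have h2 := hpow_le i'; omega
          rw [hTact' _ hN1 hN2 hnopow]
          have hidx : n - 1 - (j + 1 + p ^ (i : ℕ) - n)
              = n - 1 - (j + p ^ (i : ℕ) - n) - 1 := by omega
          have hμstep : μ (j + 1 + p ^ (i : ℕ) - n)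
              = (lowc p (n - 1 - (j + p ^ (i : ℕ) - n)) : k) * μ (j + p ^ (i : ℕ) - n) := by
            have h := hμrec (j + p ^ (i : ℕ) - n) (by omega)
            rw [show j + p ^ (i : ℕ) - n + 1 = j + 1 + p ^ (i : ℕ) - n by omega] at h
            exact h
          rw [hidx, hμstep, smul_smul]
          congr 1
          ring
        · by_cases hc2 : n ≤ p ^ (i : ℕ) + (j + 1)
          · have hpieq : p ^ (i : ℕ) = n - 1 - j := by omega
            rw [if_pos hc2, if_neg hc1, if_pos hpieq.symm, zero_smul,
              zero_add]
            rw [show j + 1 + p ^ (i : ℕ) - n = 0 by omega, hμ0, Nat.sub_zero,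
              show n - 1 - p ^ (i : ℕ) = j by omega]
            congr 1
            ring
          · have hnonew : ¬ (n - 1 - j = p ^ (i : ℕ)) := by omega
            rw [if_neg hc1, if_neg hc2, if_neg hnonew]
            simp
      rw [Finset.sum_congr rfl (fun i _ => hstep i), Finset.sum_add_distrib]
      have hA : μ j • ((lowc p (n - 1 - j) : k) • v p x (n - 1 - j - 1)
            + (∑ i : Fin m, if n - 1 - j = p ^ (i : ℕ) then s i else 0) • v p x (n - 1))
          = μ (j + 1) • v p x (n - 1 - (j + 1))
            + ∑ i : Fin m, (if n - 1 - j = p ^ (i : ℕ) then μ j * s i else 0) •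
                v p x (n - 1) := by
        rw [smul_add]
        congr 1
        · rw [smul_smul, hμrec j (by omega),
            show n - 1 - j - 1 = n - 1 - (j + 1) by omega]
          congr 1
          ring
        · rw [smul_smul, Finset.mul_sum, ← Finset.sum_smul]
          congr 1
          apply Finset.sum_congr rfl
          intro i _
          by_cases hcond : n - 1 - j = p ^ (i : ℕ)
          · rw [if_pos hcond, if_pos hcond]
          · rw [if_neg hcond, if_neg hcond, mul_zero]
      rw [hA]
      abel
  -- values at powers of p
  have hfpow : ∀ i : Fin m, f (p ^ (i : ℕ)) = μ (p ^ (i : ℕ)) • v p x (n - 1 - p ^ (i : ℕ)) := by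
    intro i
    rw [key (p ^ (i : ℕ)) (by have := hppow_lt i; omega)]
    rw [Finset.sum_eq_zero, add_zero]
    intro i' _
    rw [if_neg (by have := hpow_le i; have := hpow_le i'; omega), zero_smul]
  -- value at n
  have hfn : f n = ∑ i : Fin m, (s i * μ (n - 1 - p ^ (i : ℕ)) * μ (p ^ (i : ℕ))) •
      v p x (n - 1 - p ^ (i : ℕ)) := by
    have hstep := hfrec (n - 1)
    rw [show n - 1 + 1 = n by omega] at hstep
    rw [hstep, key (n - 1) le_rfl, map_add, map_smul, map_sum]
    rw [show n - 1 - (n - 1) = 0 by omega, hT0, smul_zero, zero_add]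
    apply Finset.sum_congr rfl
    intro i _
    have hcond : n ≤ p ^ (i : ℕ) + (n - 1) := by have := hppow1 i; omega
    rw [if_pos hcond, map_smul]
    have hidx : n - 1 - (n - 1 + p ^ (i : ℕ) - n) = n - p ^ (i : ℕ) := by
      have := hppow_lt i; omega
    rw [hidx]
    have hnop : ∀ i' : Fin m, n - p ^ (i : ℕ) ≠ p ^ (i' : ℕ) := by
      intro i'
      have := hpow_le i; have := hpow_le i'; omega
    rw [hTact' _ (by have := hppow_lt i; omega) (by have := hppow1 i; omega) hnop]
    rw [smul_smul]
    have hμstep : μ (p ^ (i : ℕ)) = (lowc p (n - p ^ (i : ℕ)) : k) * μ (p ^ (i : ℕ) - 1) := by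
      have h := hμrec (p ^ (i : ℕ) - 1) (by have := hppow_lt i; have := hppow1 i; omega)
      rw [show p ^ (i : ℕ) - 1 + 1 = p ^ (i : ℕ) by have := hppow1 i; omega] at h
      rw [h, show n - 1 - (p ^ (i : ℕ) - 1) = n - p ^ (i : ℕ) by have := hppow1 i; omega]
    rw [show n - 1 + p ^ (i : ℕ) - n = p ^ (i : ℕ) - 1 by have := hppow1 i; omega,
      show n - p ^ (i : ℕ) - 1 = n - 1 - p ^ (i : ℕ) by omega, hμstep]
    ring_nf
  -- Cayley–Hamilton
  have hCH : T ^ n = ∑ i : Fin m, φ' i Δε • T ^ (p ^ (i : ℕ)) := by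
    have h := LinearMap.aeval_self_charpoly T
    rw [show T.charpoly = X ^ n - ∑ i : Fin m, C (φ' i Δε) * X ^ (p ^ (i : ℕ)) by
      rw [hTdef]; exact hφ' Δε] at h
    rw [map_sub, map_pow, aeval_X, map_sum] at h
    have hterm : ∀ i ∈ (univ : Finset (Fin m)),
        aeval T (C (φ' i Δε) * X ^ (p ^ (i : ℕ))) = φ' i Δε • T ^ (p ^ (i : ℕ)) := by
      intro i _
      rw [map_mul, aeval_C, map_pow, aeval_X, ← Algebra.smul_def]
    rw [Finset.sum_congr rfl hterm] at h
    exact sub_eq_zero.mp h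
  -- compare coefficients
  have hcoef : ∀ i : Fin m, φ' i Δε = s i * μ (n - 1 - p ^ (i : ℕ)) := by
    have happ := LinearMap.congr_fun hCH (v p x (n - 1))
    rw [LinearMap.sum_apply] at happ
    have hL : (T ^ n) (v p x (n - 1)) = f n := rfl
    rw [hL, hfn] at happ
    have hR : ∀ i ∈ (univ : Finset (Fin m)),
        (φ' i Δε • T ^ (p ^ (i : ℕ))) (v p x (n - 1))
        = (φ' i Δε * μ (p ^ (i : ℕ))) • v p x (n - 1 - p ^ (i : ℕ)) := by
      intro i _
      rw [LinearMap.smul_apply]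
      have : (T ^ (p ^ (i : ℕ))) (v p x (n - 1)) = f (p ^ (i : ℕ)) := rfl
      rw [this, hfpow i, smul_smul]
    rw [Finset.sum_congr rfl hR] at happ
    have hzero : ∑ i : Fin m,
        ((φ' i Δε - s i * μ (n - 1 - p ^ (i : ℕ))) * μ (p ^ (i : ℕ))) •
          v p x (n - 1 - p ^ (i : ℕ)) = 0 := by
      have hsub := sub_eq_zero.mpr happ.symm
      rw [← Finset.sum_sub_distrib] at hsub
      rw [← hsub]
      apply Finset.sum_congr rfl
      intro i _
      rw [← sub_smul]
      congr 1
      ring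
    set g : Fin m → Fin n := fun i => ⟨n - 1 - p ^ (i : ℕ), by have := hppow1 i; omega⟩
      with hg
    have hginj : Function.Injective g := by
      intro a b hab
      simp only [hg, Fin.mk.injEq] at hab
      have ha := hppow_lt a; have hb := hppow_lt b
      have hpow : p ^ (a : ℕ) = p ^ (b : ℕ) := by omega
      have := Nat.pow_right_injective hp2 hpow
      exact Fin.ext this
    have hLI' := hLI.comp g hginj
    rw [Fintype.linearIndependent_iff] at hLI'
    intro i
    have hcomp : ∀ i : Fin m, (V ∘ g) i = v p x (n - 1 - p ^ (i : ℕ)) := fun i => rfl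
    have hz := hLI' (fun i => (φ' i Δε - s i * μ (n - 1 - p ^ (i : ℕ))) * μ (p ^ (i : ℕ)))
      (by rw [← hzero]; apply Finset.sum_congr rfl; intro i _; rw [hcomp i]) i
    rcases mul_eq_zero.mp hz with h | h
    · exact sub_eq_zero.mp h
    · exact absurd h (hμne _ (by have := hpow_le i; omega))
  -- Wilson evaluation
  have hwil : ∀ i : Fin m, s i * μ (n - 1 - p ^ (i : ℕ)) = ε i := by
    intro i
    have hμval : μ (n - 1 - p ^ (i : ℕ)) = (-1 : k) ^ (m - (i : ℕ)) := by
      rw [hμ]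
      simp only
      rw [show n - (n - 1 - p ^ (i : ℕ)) = p ^ (i : ℕ) + 1 by
        have := hppow_lt i; omega]
      exact mu_formula (by omega) i.isLt
    rw [hμval, hs]
    simp only
    have hsq : ((-1 : k)) ^ (m - (i : ℕ)) * (-1 : k) ^ (m - (i : ℕ)) = 1 := by
      rw [← pow_add]
      exact Even.neg_one_pow ⟨m - (i : ℕ), rfl⟩
    calc (-1 : k) ^ (m - (i : ℕ)) * ε i * (-1 : k) ^ (m - (i : ℕ))
        = ((-1 : k) ^ (m - (i : ℕ)) * (-1 : k) ^ (m - (i : ℕ))) * ε i := by ring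
      _ = ε i := by rw [hsq, one_mul]
  have part1 : ∀ i : Fin m, φ' i Δε = ε i := fun i => by rw [hcoef i, hwil i]
  refine ⟨part1, ?_⟩
  rw [hCH]
  exact Finset.sum_congr rfl (fun i _ => by rw [part1 i])
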